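/- Under the MMSB setup, define b_1 = 1/√(𝟏'(V_{*,1}(𝓘,:) V_{*,1}(𝓘,:)')^{-1}𝟏) and w_1 = b_1^{-1} V_{*,1}(𝓘,:)' (V_{*,1}(𝓘,:) V_{*,1}(𝓘,:)')^{-1}𝟏 / (𝟏'(V_{*,1}(𝓘,:) V_{*,1}(𝓘,:)')^{-1}𝟏). Then for every node i: if node i is pure (Π(i,k) = 1 for some k), then V_{*,1}(i,:) w_1 = b_1; and if node i is not pure, then V_{*,1}(i,:) w_1 ≠ b_1. -/

import Mathlib

open Matrix BigOperators

/-- Euclidean norm of the `i`-th row of a matrix. -/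
noncomputable def rowNorm {m k : ℕ} (M : Matrix (Fin m) (Fin k) ℝ) (i : Fin m) : ℝ :=
  Real.sqrt (∑ j, (M i j) ^ 2)

/-- Lemma E.1: with `b₁ = 1/√(𝟏'(V_{*,1}(𝓘,:)V_{*,1}(𝓘,:)')⁻¹𝟏)` and
`w₁ = b₁⁻¹ V_{*,1}(𝓘,:)' (V_{*,1}(𝓘,:)V_{*,1}(𝓘,:)')⁻¹𝟏 / (𝟏'(V_{*,1}(𝓘,:)V_{*,1}(𝓘,:)')⁻¹𝟏)`,
a node `i` satisfies `V_{*,1}(i,:) w₁ = b₁` if and only if it is pure. -/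
theorem stmt_13
    {n K : ℕ} (hn : 0 < n) (hK : 0 < K) (hKn : K ≤ n)
    (Pi : Matrix (Fin n) (Fin K) ℝ)
    (hPi_nonneg : ∀ i k, 0 ≤ Pi i k)
    (hPi_rowsum : ∀ i, ∑ k, Pi i k = 1)
    (hPi_rank : Pi.rank = K)
    (hpure : ∀ k : Fin K, ∃ i : Fin n, ∀ l, Pi i l = if l = k then 1 else 0)
    (Pt : Matrix (Fin K) (Fin K) ℝ)
    (hPt_symm : Pt.IsSymm)
    (hPt_nonneg : ∀ k l, 0 ≤ Pt k l)
    (hPt_rank : Pt.rank = K)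
    (hPt_le_one : ∀ k l, Pt k l ≤ 1)
    (hPt_max : ∃ k l, Pt k l = 1)
    (ρ τ : ℝ) (hρ0 : 0 < ρ) (hρ1 : ρ ≤ 1) (hτ : 0 ≤ τ)
    (Om : Matrix (Fin n) (Fin n) ℝ) (hOm : Om = Pi * (ρ • Pt) * Piᵀ)
    (deg : Fin n → ℝ) (hdeg : ∀ i, deg i = ∑ j, Om i j)
    (hpos : ∀ i, 0 < deg i + τ)
    (Ltau : Matrix (Fin n) (Fin n) ℝ)
    (hLtau : Ltau = Matrix.diagonal (fun i => (Real.sqrt (deg i + τ))⁻¹) * Om *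
      Matrix.diagonal (fun i => (Real.sqrt (deg i + τ))⁻¹))
    (Idx : Fin K → Fin n) (hIdx : Pi.submatrix Idx id = 1)
    (V : Matrix (Fin n) (Fin K) ℝ) (e : Fin K → ℝ)
    (hVorth : Vᵀ * V = 1) (he : ∀ k, e k ≠ 0)
    (hVE : Ltau = V * Matrix.diagonal e * Vᵀ)
    (hVrow : ∀ i, V i ≠ 0)
    (Vstar1 : Matrix (Fin n) (Fin K) ℝ)
    (hVstar1 : ∀ i k, Vstar1 i k = V i k / rowNorm V i)
    (hVstar1unit : IsUnit (Vstar1.submatrix Idx id))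
    (hGpos : ∀ k, 0 < (((Vstar1.submatrix Idx id) * (Vstar1.submatrix Idx id)ᵀ)⁻¹ *ᵥ
      (fun _ => (1 : ℝ))) k)
    (s b1 : ℝ)
    (hs : s = (fun _ => (1 : ℝ)) ⬝ᵥ
      (((Vstar1.submatrix Idx id) * (Vstar1.submatrix Idx id)ᵀ)⁻¹ *ᵥ (fun _ => (1 : ℝ))))
    (hb1 : b1 = (Real.sqrt s)⁻¹)
    (w1 : Fin K → ℝ)
    (hw1 : w1 = (b1⁻¹ * s⁻¹) • ((Vstar1.submatrix Idx id)ᵀ *ᵥ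
      (((Vstar1.submatrix Idx id) * (Vstar1.submatrix Idx id)ᵀ)⁻¹ *ᵥ (fun _ => (1 : ℝ))))) :
    ∀ i : Fin n,
      ((∃ k, Pi i k = 1) → Vstar1 i ⬝ᵥ w1 = b1) ∧
      (¬ (∃ k, Pi i k = 1) → Vstar1 i ⬝ᵥ w1 ≠ b1) := by
  classical
  -- abbreviations
  set R : Matrix (Fin K) (Fin K) ℝ := Vstar1.submatrix Idx id with hR
  have hRapp : ∀ k j, R k j = Vstar1 (Idx k) j := fun k j => rfl
  have hd : ∀ i, (0:ℝ) < Real.sqrt (deg i + τ) := fun i => Real.sqrt_pos.mpr (hpos i)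
  -- row norms are positive
  have hrn : ∀ i, 0 < rowNorm V i := by
    intro i
    obtain ⟨j, hj⟩ := Function.ne_iff.mp (hVrow i)
    have hj' : V i j ≠ 0 := hj
    have : (0:ℝ) < ∑ j, (V i j) ^ 2 := by
      refine Finset.sum_pos' (fun l _ => sq_nonneg _) ?_
      exact ⟨j, Finset.mem_univ j, (sq_nonneg _).lt_of_ne (Ne.symm (pow_ne_zero 2 hj'))⟩
    exact Real.sqrt_pos.mpr this
  -- rows of Vstar1 are unit vectors
  have hunit : ∀ i, ∑ j, (Vstar1 i j) ^ 2 = 1 := by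
    intro i
    have h2 : (rowNorm V i) ^ 2 = ∑ j, (V i j) ^ 2 :=
      Real.sq_sqrt (Finset.sum_nonneg fun j _ => sq_nonneg _)
    simp only [hVstar1, div_pow]
    rw [← Finset.sum_div, ← h2, div_self (pow_ne_zero 2 (hrn i).ne')]
  -- Step A : V = D * (Pi * B) for some B
  obtain ⟨B, hVB⟩ : ∃ B : Matrix (Fin K) (Fin K) ℝ,
      V = Matrix.diagonal (fun i => (Real.sqrt (deg i + τ))⁻¹) * (Pi * B) := by
    refine ⟨(ρ • Pt) * (Piᵀ * (Matrix.diagonal (fun i => (Real.sqrt (deg i + τ))⁻¹) *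
      (V * Matrix.diagonal (fun k => (e k)⁻¹)))), ?_⟩
    have h1 : Ltau * V = V * Matrix.diagonal e := by
      rw [hVE, Matrix.mul_assoc (V * Matrix.diagonal e) Vᵀ V, hVorth, Matrix.mul_one]
    have h2 : V = Ltau * V * Matrix.diagonal (fun k => (e k)⁻¹) := by
      rw [h1, Matrix.mul_assoc, Matrix.diagonal_mul_diagonal]
      rw [show (fun k => e k * (e k)⁻¹) = fun _ => (1:ℝ) from
        funext fun k => mul_inv_cancel₀ (he k), Matrix.diagonal_one, Matrix.mul_one]
    calc V = Ltau * V * Matrix.diagonal (fun k => (e k)⁻¹) := h2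
      _ = _ := by rw [hLtau, hOm]; simp only [Matrix.mul_assoc]
  -- entrywise form
  have hVrowB : ∀ i j, V i j = (Real.sqrt (deg i + τ))⁻¹ * ∑ k, Pi i k * B k j := by
    intro i j
    rw [hVB, Matrix.diagonal_mul, Matrix.mul_apply]
  -- rows of Pi at pure nodes
  have hPiIdx : ∀ k l, Pi (Idx k) l = if k = l then 1 else 0 := by
    intro k l
    have := congrFun (congrFun hIdx k) l
    simpa [Matrix.submatrix_apply, Matrix.one_apply] using this
  -- B rows are positive multiples of Vstar1 rows at pure nodes
  obtain ⟨g, hgdef⟩ : ∃ g : Fin K → ℝ,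
      ∀ k, g k = Real.sqrt (deg (Idx k) + τ) * rowNorm V (Idx k) := ⟨_, fun k => rfl⟩
  have hgpos : ∀ k, 0 < g k := fun k => (hgdef k) ▸ mul_pos (hd _) (hrn _)
  have hBrow : ∀ k j, B k j = g k * Vstar1 (Idx k) j := by
    intro k j
    have h1 : V (Idx k) j = (Real.sqrt (deg (Idx k) + τ))⁻¹ * B k j := by
      rw [hVrowB]
      congr 1
      rw [Finset.sum_eq_single k (fun l _ hl => by rw [hPiIdx]; simp [Ne.symm hl])
        (fun h => absurd (Finset.mem_univ k) h)]
      rw [hPiIdx]; simp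
    have h2 : B k j = Real.sqrt (deg (Idx k) + τ) * V (Idx k) j := by
      rw [h1, ← mul_assoc, mul_inv_cancel₀ (hd (Idx k)).ne', one_mul]
    rw [h2, hVstar1, hgdef, mul_assoc, mul_comm (rowNorm V (Idx k)),
      div_mul_cancel₀ _ (hrn (Idx k)).ne']
  -- expansion of rows of Vstar1
  obtain ⟨t, htdef⟩ : ∃ t : Fin n → ℝ,
      ∀ i, t i = (rowNorm V i)⁻¹ * (Real.sqrt (deg i + τ))⁻¹ := ⟨_, fun i => rfl⟩
  have htpos : ∀ i, 0 < t i := fun i =>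
    (htdef i) ▸ mul_pos (inv_pos.mpr (hrn i)) (inv_pos.mpr (hd i))
  have hexp : ∀ i j, Vstar1 i j = t i * ∑ k, (Pi i k * g k) * Vstar1 (Idx k) j := by
    intro i j
    have hsum : ∑ k, Pi i k * B k j = ∑ k, (Pi i k * g k) * Vstar1 (Idx k) j :=
      Finset.sum_congr rfl fun k _ => by rw [hBrow]; ring
    rw [hVstar1, hVrowB, htdef, ← hsum, div_eq_mul_inv]
    ring
  -- positivity of s and b1
  have hKne : Nonempty (Fin K) := ⟨⟨0, hK⟩⟩
  have hspos : 0 < s := by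
    rw [hs]
    simp only [dotProduct, one_mul]
    exact Finset.sum_pos (fun k _ => hGpos k) Finset.univ_nonempty
  have hsq : Real.sqrt s * Real.sqrt s = s := Real.mul_self_sqrt hspos.le
  have hsqpos : 0 < Real.sqrt s := Real.sqrt_pos.mpr hspos
  have hb1pos : 0 < b1 := by rw [hb1]; positivity
  have hb1c : b1⁻¹ * s⁻¹ = b1 := by
    rw [hb1, inv_inv, ← hsq]
    field_simp
    rw [Real.sqrt_sq hsqpos.le]
  -- rows at index nodes dotted with w1 give b1
  have hRdet : IsUnit (R * Rᵀ).det := by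
    rw [← Matrix.isUnit_iff_isUnit_det]
    exact hVstar1unit.mul (by
      rw [Matrix.isUnit_iff_isUnit_det, Matrix.det_transpose,
        ← Matrix.isUnit_iff_isUnit_det]; exact hVstar1unit)
  have hRw : ∀ k, Vstar1 (Idx k) ⬝ᵥ w1 = b1 := by
    intro k
    have h0 : R *ᵥ (Rᵀ *ᵥ ((R * Rᵀ)⁻¹ *ᵥ (fun _ => (1:ℝ)))) = fun _ => (1:ℝ) := by
      rw [Matrix.mulVec_mulVec ((R * Rᵀ)⁻¹ *ᵥ fun _ => (1:ℝ)) R Rᵀ,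
        Matrix.mulVec_mulVec (fun _ => (1:ℝ)) (R * Rᵀ) (R * Rᵀ)⁻¹,
        Matrix.mul_nonsing_inv _ hRdet, Matrix.one_mulVec]
    have h1 : R *ᵥ w1 = fun _ => b1 := by
      rw [hw1, Matrix.mulVec_smul, h0]
      funext x
      simp [hb1c]
    have h2 : (R *ᵥ w1) k = R k ⬝ᵥ w1 := rfl
    have h3 : R k ⬝ᵥ w1 = Vstar1 (Idx k) ⬝ᵥ w1 := rfl
    rw [← h3, ← h2, h1]
  -- dot product formula
  have hdot : ∀ i, Vstar1 i ⬝ᵥ w1 = b1 * (t i * ∑ k, Pi i k * g k) := by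
    intro i
    have h1 : Vstar1 i ⬝ᵥ w1 = t i * ∑ k, (Pi i k * g k) * (Vstar1 (Idx k) ⬝ᵥ w1) := by
      have lhs : Vstar1 i ⬝ᵥ w1
          = ∑ j, (t i * ∑ k, (Pi i k * g k) * Vstar1 (Idx k) j) * w1 j :=
        Finset.sum_congr rfl fun j _ => by rw [hexp i j]
      rw [lhs]
      simp only [dotProduct, Finset.sum_mul, Finset.mul_sum]
      rw [Finset.sum_comm]
      exact Finset.sum_congr rfl fun k _ => Finset.sum_congr rfl fun j _ => by ring
    rw [h1, Finset.sum_congr rfl fun k (_ : k ∈ Finset.univ) => by rw [hRw k],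
      ← Finset.sum_mul]
    ring
  -- main conclusion
  intro i
  constructor
  · -- pure case
    rintro ⟨k, hk⟩
    have hz : ∀ l, l ≠ k → Pi i l = 0 := by
      intro l hl
      have h0 := hPi_rowsum i
      rw [← Finset.add_sum_erase _ _ (Finset.mem_univ k), hk] at h0
      have h1 : ∑ x ∈ Finset.univ.erase k, Pi i x = 0 := by linarith
      exact (Finset.sum_eq_zero_iff_of_nonneg
        (fun x _ => hPi_nonneg i x)).mp h1 l (Finset.mem_erase.mpr ⟨hl, Finset.mem_univ l⟩)
    have hsum : ∑ l, Pi i l * g l = g k := by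
      rw [Finset.sum_eq_single k (fun l _ hl => by rw [hz l hl]; ring)
        (fun h => absurd (Finset.mem_univ k) h), hk, one_mul]
    have hrow : ∀ j, Vstar1 i j = (t i * g k) * Vstar1 (Idx k) j := by
      intro j
      rw [hexp, Finset.sum_eq_single k (fun l _ hl => by rw [hz l hl]; ring)
        (fun h => absurd (Finset.mem_univ k) h), hk]
      ring
    have hone : t i * g k = 1 := by
      have h1 : ∑ j, (Vstar1 i j)^2 = (t i * g k)^2 * ∑ j, (Vstar1 (Idx k) j)^2 := by
        rw [Finset.mul_sum]
        exact Finset.sum_congr rfl fun j _ => by rw [hrow j]; ring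
      rw [hunit i, hunit (Idx k), mul_one] at h1
      nlinarith [mul_pos (htpos i) (hgpos k)]
    rw [hdot i, hsum, hone, mul_one]
  · -- mixed case
    intro hmix hcontra
    rw [hdot i] at hcontra
    have hT : t i * ∑ k, Pi i k * g k = 1 :=
      mul_left_cancel₀ (ne_of_gt hb1pos) (by rw [hcontra, mul_one])
    -- two strictly positive entries
    obtain ⟨k1, hk1⟩ : ∃ k, 0 < Pi i k := by
      by_contra h
      push_neg at h
      have h0 : ∑ k, Pi i k = 0 :=
        Finset.sum_eq_zero fun l _ => le_antisymm (h l) (hPi_nonneg i l)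
      rw [hPi_rowsum i] at h0; norm_num at h0
    obtain ⟨k2, hk2ne, hk2⟩ : ∃ k2, k2 ≠ k1 ∧ 0 < Pi i k2 := by
      by_contra h
      push_neg at h
      have hz : ∀ l, l ≠ k1 → Pi i l = 0 := fun l hl =>
        le_antisymm (h l hl) (hPi_nonneg i l)
      have h1 : ∑ l, Pi i l = Pi i k1 :=
        Finset.sum_eq_single k1 (fun l _ hl => hz l hl) (fun h => absurd (Finset.mem_univ k1) h)
      rw [hPi_rowsum i] at h1
      exact hmix ⟨k1, h1.symm⟩
    -- convex coefficients
    obtain ⟨c, hcdef⟩ : ∃ c : Fin K → ℝ,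
        ∀ l, c l = t i * (Pi i l * g l) := ⟨_, fun l => rfl⟩
    have hcnn : ∀ l, 0 ≤ c l := fun l => (hcdef l) ▸
      mul_nonneg (htpos i).le (mul_nonneg (hPi_nonneg i l) (hgpos l).le)
    have hcsum : ∑ l, c l = 1 := by
      rw [Finset.sum_congr rfl fun l (_ : l ∈ Finset.univ) => hcdef l, ← Finset.mul_sum]
      exact hT
    have hck1 : 0 < c k1 := (hcdef k1) ▸ mul_pos (htpos i) (mul_pos hk1 (hgpos k1))
    have hck2 : 0 < c k2 := (hcdef k2) ▸ mul_pos (htpos i) (mul_pos hk2 (hgpos k2))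
    have hVc : ∀ j, Vstar1 i j = ∑ l, c l * Vstar1 (Idx l) j := by
      intro j
      rw [hexp, Finset.mul_sum]
      exact Finset.sum_congr rfl fun l _ => by rw [hcdef l]; ring
    -- inner products
    obtain ⟨ip, hipdef⟩ : ∃ ip : Fin K → Fin K → ℝ,
        ∀ l m, ip l m = ∑ j, Vstar1 (Idx l) j * Vstar1 (Idx m) j := ⟨_, fun l m => rfl⟩
    have hiple : ∀ l m, ip l m ≤ 1 := by
      intro l m
      have h := Finset.sum_mul_sq_le_sq_mul_sq Finset.univ
        (fun j => Vstar1 (Idx l) j) (fun j => Vstar1 (Idx m) j)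
      rw [hunit (Idx l), hunit (Idx m), one_mul] at h
      rw [hipdef]
      nlinarith [h]
    have hexpand : ∑ j, (Vstar1 i j)^2 = ∑ l, ∑ m, c l * c m * ip l m := by
      have h1 : ∀ j, (Vstar1 i j)^2
          = ∑ l, ∑ m, (c l * Vstar1 (Idx l) j) * (c m * Vstar1 (Idx m) j) := by
        intro j
        rw [pow_two, hVc j, Finset.sum_mul_sum]
      rw [Finset.sum_congr rfl fun j (_ : j ∈ Finset.univ) => h1 j, Finset.sum_comm]
      refine Finset.sum_congr rfl fun l _ => ?_
      rw [Finset.sum_comm]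
      refine Finset.sum_congr rfl fun m _ => ?_
      rw [hipdef, Finset.mul_sum]
      exact Finset.sum_congr rfl fun j _ => by ring
    have hexpand2 : ∑ l, ∑ m, c l * c m * ip l m = 1 := by
      rw [← hexpand]; exact hunit i
    have hcc : ∑ l, ∑ m, c l * c m = 1 := by
      rw [← Finset.sum_mul_sum, hcsum, one_mul]
    have hzero : ∑ l, ∑ m, c l * c m * (1 - ip l m) = 0 := by
      have h1 : ∑ l, ∑ m, c l * c m * (1 - ip l m)
          = (∑ l, ∑ m, c l * c m) - ∑ l, ∑ m, c l * c m * ip l m := by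
        rw [← Finset.sum_sub_distrib]
        refine Finset.sum_congr rfl fun l _ => ?_
        rw [← Finset.sum_sub_distrib]
        exact Finset.sum_congr rfl fun m _ => by ring
      rw [h1, hcc, hexpand2, sub_self]
    have hterm : c k1 * c k2 * (1 - ip k1 k2) = 0 := by
      have hnn : ∀ l ∈ Finset.univ, (0:ℝ) ≤ ∑ m, c l * c m * (1 - ip l m) :=
        fun l _ => Finset.sum_nonneg fun m _ =>
          mul_nonneg (mul_nonneg (hcnn l) (hcnn m)) (by linarith [hiple l m])
      have h1 := (Finset.sum_eq_zero_iff_of_nonneg hnn).mp hzero k1 (Finset.mem_univ k1)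
      have hnn2 : ∀ m ∈ Finset.univ, (0:ℝ) ≤ c k1 * c m * (1 - ip k1 m) :=
        fun m _ => mul_nonneg (mul_nonneg (hcnn k1) (hcnn m)) (by linarith [hiple k1 m])
      exact (Finset.sum_eq_zero_iff_of_nonneg hnn2).mp h1 k2 (Finset.mem_univ k2)
    have hip1 : ip k1 k2 = 1 := by
      have hne := mul_ne_zero (ne_of_gt hck1) (ne_of_gt hck2)
      rcases mul_eq_zero.mp hterm with h | h
      · exact absurd h hne
      · linarith
    -- rows k1 and k2 of R coincide
    have hroweq : Vstar1 (Idx k1) = Vstar1 (Idx k2) := by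
      have hipsum : ∑ j, Vstar1 (Idx k1) j * Vstar1 (Idx k2) j = 1 := by
        rw [← hipdef]; exact hip1
      have h0 : ∑ j, (Vstar1 (Idx k1) j - Vstar1 (Idx k2) j)^2 = 0 := by
        have e1 : ∀ j, (Vstar1 (Idx k1) j - Vstar1 (Idx k2) j)^2
            = ((Vstar1 (Idx k1) j)^2 + (Vstar1 (Idx k2) j)^2)
              - 2 * (Vstar1 (Idx k1) j * Vstar1 (Idx k2) j) := fun j => by ring
        rw [Finset.sum_congr rfl fun j (_ : j ∈ Finset.univ) => e1 j,
          Finset.sum_sub_distrib, Finset.sum_add_distrib, hunit, hunit,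
          ← Finset.mul_sum, hipsum]
        ring
      funext j
      have h2 := (Finset.sum_eq_zero_iff_of_nonneg
        (fun j _ => sq_nonneg _)).mp h0 j (Finset.mem_univ j)
      have h3 := sq_eq_zero_iff.mp h2
      linarith
    have hdet0 : R.det = 0 := by
      refine Matrix.det_zero_of_row_eq hk2ne ?_
      funext j
      rw [hRapp, hRapp, hroweq]
    exact ((Matrix.isUnit_iff_isUnit_det R).mp hVstar1unit).ne_zero hdet0
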